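/- Let Γ be the free product of d ≥ 2 copies of ℤ/kℤ with k ≥ 3, with Cayley hyper-tree whose hyper-edges are left cosets of the generator subgroups, and let X ⊆ {0,1}^Γ be the subshift of proper 2-colorings (every hyper-edge receives both colors). Then the shift action of Γ on X is topologically mixing: for any nonempty open A, B ⊆ X there is N such that for all g ∈ Γ with word length |g| > N, gA ∩ B ≠ ∅. -/

import Mathlib

open Monoid.CoprodI Multiplicative List

namespace Stmt18Aux

/-! ### common prefix length -/

variable {α : Type*} [DecidableEq α]

def cpl : List α → List α → ℕ
  | a :: as, b :: bs => if a = b then cpl as bs + 1 else 0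
  | _, _ => 0

@[simp] lemma cpl_nil_right (l : List α) : cpl l [] = 0 := by cases l <;> rfl
@[simp] lemma cpl_nil_left (l : List α) : cpl [] l = 0 := by cases l <;> rfl
lemma cpl_cons (a b : α) (as bs : List α) :
    cpl (a :: as) (b :: bs) = if a = b then cpl as bs + 1 else 0 := rfl

lemma cpl_le_left : ∀ (l₁ l₂ : List α), cpl l₁ l₂ ≤ l₁.length := by
  intro l₁
  induction l₁ with
  | nil => simp
  | cons a as ih =>
    intro l₂; cases l₂ with
    | nil => simp
    | cons b bs =>
      rw [cpl_cons]; split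
      · simpa using ih bs
      · simp

lemma prefix_le_cpl : ∀ {p l₁ l₂ : List α}, p <+: l₁ → p <+: l₂ → p.length ≤ cpl l₁ l₂ := by
  intro p
  induction p with
  | nil => simp
  | cons a as ih =>
    intro l₁ l₂ h1 h2
    obtain ⟨t1, rfl⟩ := h1
    obtain ⟨t2, rfl⟩ := h2
    have := ih (l₁ := as ++ t1) (l₂ := as ++ t2) ⟨t1, rfl⟩ ⟨t2, rfl⟩
    simp only [List.cons_append, cpl_cons, List.length_cons, if_pos rfl]
    simpa using this

lemma cpl_eq_left : ∀ {l₁ l₂ : List α}, cpl l₁ l₂ = l₁.length → l₁ <+: l₂ := by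
  intro l₁
  induction l₁ with
  | nil => intro l₂ _; exact List.nil_prefix
  | cons a as ih =>
    intro l₂ h
    cases l₂ with
    | nil => simp at h
    | cons b bs =>
      rw [cpl_cons] at h
      split at h
      · subst ‹a = b›
        simpa using ih (by simpa using h)
      · simp at h

lemma cpl_append_lt {l₁ l₂ : List α} (h : cpl l₁ l₂ < l₁.length) (t : List α) :
    cpl (l₁ ++ t) l₂ = cpl l₁ l₂ := by
  induction l₁ generalizing l₂ with
  | nil => simp at h
  | cons a as ih =>
    cases l₂ with
    | nil => simp
    | cons b bs =>
      rw [List.cons_append, cpl_cons, cpl_cons]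
      rw [cpl_cons] at h
      by_cases hab : a = b
      · rw [if_pos hab] at h ⊢; rw [if_pos hab, ih (by simpa using h)]
      · rw [if_neg hab, if_neg hab]

lemma cpl_append_left : ∀ (a u v : List α), cpl (a ++ u) (a ++ v) = a.length + cpl u v := by
  intro a
  induction a with
  | nil => simp
  | cons x xs ih => intro u v; simp [cpl_cons, ih u v]; omega


/-! ### free product setup -/

variable {d k : ℕ}

abbrev Gam (d k : ℕ) := Monoid.CoprodI fun _ : Fin d => Multiplicative (ZMod k)

abbrev sgen (d k : ℕ) (i : Fin d) : Gam d k :=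
  Monoid.CoprodI.of (M := fun _ : Fin d => Multiplicative (ZMod k)) (i := i)
    (Multiplicative.ofAdd (1 : ZMod k))

abbrev ofc {d k : ℕ} (i : Fin d) (m : Multiplicative (ZMod k)) : Gam d k :=
  Monoid.CoprodI.of (M := fun _ : Fin d => Multiplicative (ZMod k)) (i := i) m

def nf (v : Gam d k) : List (Σ i : Fin d, Multiplicative (ZMod k)) :=
  (Word.equiv v).toList

lemma equiv_def (v : Gam d k) : Word.equiv v = v • Word.empty := rfl

lemma equiv_mul (a u : Gam d k) : Word.equiv (a * u) = a • Word.equiv u := by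
  rw [equiv_def, equiv_def, mul_smul]

lemma prod_equiv (v : Gam d k) : Word.prod (Word.equiv v) = v :=
  Word.equiv.left_inv v

lemma equiv_prod (w : Word fun _ : Fin d => Multiplicative (ZMod k)) :
    Word.equiv (Word.prod w) = w :=
  Word.equiv.right_inv w

lemma rcons_equivPair (i : Fin d) (w : Word fun _ : Fin d => Multiplicative (ZMod k)) :
    Word.rcons (Word.equivPair i w) = w := by
  rw [← Word.equivPair_symm]
  exact (Word.equivPair i).symm_apply_apply w

lemma rcons_toList {i : Fin d} (p : Word.Pair (fun _ : Fin d => Multiplicative (ZMod k)) i) :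
    (Word.rcons p).toList =
      if p.head = 1 then p.tail.toList else ⟨i, p.head⟩ :: p.tail.toList := by
  rw [Word.rcons]
  split <;> simp_all [Word.cons]

lemma nf_of_mul {i : Fin d} (mm : Multiplicative (ZMod k)) (hmm : mm ≠ 1) (u : Gam d k)
    (hu : (Word.equiv u).fstIdx ≠ some i) :
    nf (ofc i mm * u) = ⟨i, mm⟩ :: nf u := by
  unfold nf
  rw [equiv_mul, Word.of_smul_def, Word.equivPair_eq_of_fstIdx_ne hu]
  rw [rcons_toList]
  simp [hmm]

lemma exists_decomp (u : Gam d k) (i : Fin d) :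
    ∃ (b : Multiplicative (ZMod k)) (u' : Gam d k),
      u = ofc i b * u' ∧ (Word.equiv u').fstIdx ≠ some i := by
  refine ⟨(Word.equivPair i (Word.equiv u)).head,
    Word.prod (Word.equivPair i (Word.equiv u)).tail, ?_, ?_⟩
  · conv_lhs => rw [← prod_equiv u, ← rcons_equivPair i (Word.equiv u)]
    rw [Word.prod_rcons]
  · rw [equiv_prod]
    exact (Word.equivPair i (Word.equiv u)).fstIdx_ne

lemma step_suffix (i : Fin d) (mm : Multiplicative (ZMod k)) (u : Gam d k) :
    ∃ t, t <:+ nf u ∧ t <:+ nf (ofc i mm * u) ∧ (nf u).length ≤ t.length + 1 := by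
  refine ⟨(Word.equivPair i (Word.equiv u)).tail.toList, ?_, ?_, ?_⟩
  · have h1 : nf u = (Word.rcons (Word.equivPair i (Word.equiv u))).toList := by
      unfold nf; rw [rcons_equivPair i (Word.equiv u)]
    rw [h1, rcons_toList]
    split
    · exact List.suffix_rfl
    · exact List.suffix_cons _ _
  · have h2 : nf (ofc i mm * u) =
        (Word.rcons (M := fun _ : Fin d => Multiplicative (ZMod k))
          { Word.equivPair i (Word.equiv u) with
          head := mm * (Word.equivPair i (Word.equiv u)).head }).toList := by
      unfold nf
      rw [equiv_mul, Word.of_smul_def]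
    rw [h2, rcons_toList]
    split
    · exact List.suffix_rfl
    · exact List.suffix_cons _ _
  · have h1 : nf u = (Word.rcons (Word.equivPair i (Word.equiv u))).toList := by
      unfold nf; rw [rcons_equivPair i (Word.equiv u)]
    rw [h1, rcons_toList]
    split <;> simp

lemma v_prod (v : Gam d k) :
    ((nf v).map fun p => ofc p.1 p.2).prod = v := by
  conv_rhs => rw [← prod_equiv v]
  rfl

lemma list_suffix (l : List (Σ i : Fin d, Multiplicative (ZMod k))) (u : Gam d k) :
    ∃ t, t <:+ nf u ∧ t <:+ nf ((l.map fun p => ofc p.1 p.2).prod * u) ∧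
      (nf u).length ≤ t.length + l.length := by
  induction l with
  | nil => exact ⟨nf u, List.suffix_rfl, by simp, by simp⟩
  | cons p l ih =>
    obtain ⟨t1, h1u, h1v, h1len⟩ := ih
    obtain ⟨t2, h2u, h2v, h2len⟩ := step_suffix p.1 p.2 ((l.map fun p => ofc p.1 p.2).prod * u)
    have hmul : (((p :: l).map fun p => ofc p.1 p.2).prod * u) =
        ofc p.1 p.2 * ((l.map fun p => ofc p.1 p.2).prod * u) := by
      rw [List.map_cons, List.prod_cons, mul_assoc]
    rcases List.suffix_or_suffix_of_suffix h1v h2u with h | h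
    · refine ⟨t1, h1u, ?_, ?_⟩
      · rw [hmul]; exact h.trans h2v
      · simp only [List.length_cons]; omega
    · refine ⟨t2, h.trans h1u, by rw [hmul]; exact h2v, ?_⟩
      have hle : t1.length ≤ ((nf ((l.map fun p => ofc p.1 p.2).prod * u))).length :=
        h1v.length_le
      simp only [List.length_cons]
      omega

lemma suffix_bound (a u : Gam d k) :
    (nf u).length ≤ cpl ((nf (a * u)).reverse) ((nf u).reverse) + (nf a).length := by
  obtain ⟨t, h1, h2, hlen⟩ := list_suffix (nf a) u
  rw [v_prod] at h2
  have hp := prefix_le_cpl (List.reverse_prefix.2 h2) (List.reverse_prefix.2 h1)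
  simp only [List.length_reverse] at hp
  omega


/-! ### generators and cosets -/

lemma sgen_pow (i : Fin d) (j : ℕ) :
    sgen d k i ^ j = ofc i (Multiplicative.ofAdd (j : ZMod k)) := by
  rw [← map_pow]
  congr 1
  rw [← ofAdd_nsmul]
  congr 1
  rw [nsmul_eq_mul, mul_one]

lemma ofc_inv (i : Fin d) (m : Multiplicative (ZMod k)) :
    (ofc i m)⁻¹ = ofc i m⁻¹ := by
  rw [← map_inv]

lemma coset_repr (g' : Gam d k) (i : Fin d) (j : ℕ) :
    (g' * sgen d k i ^ j)⁻¹ = ofc i (Multiplicative.ofAdd (-(j : ZMod k))) * g'⁻¹ := by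
  rw [mul_inv_rev, sgen_pow, ofc_inv, ofAdd_neg]

lemma val_cast_self (hk : 3 ≤ k) (c : ZMod k) : ((c.val : ℕ) : ZMod k) = c := by
  have : NeZero k := ⟨by omega⟩
  rw [ZMod.natCast_val, ZMod.cast_id]

lemma exists_j (hk : 3 ≤ k) (g' : Gam d k) (i : Fin d) (c : ZMod k) :
    ∃ j : ℕ, g' * sgen d k i ^ j = (ofc i (Multiplicative.ofAdd c) * g'⁻¹)⁻¹ := by
  refine ⟨(-c).val, ?_⟩
  rw [← inv_inj, coset_repr, val_cast_self hk, neg_neg, inv_inv]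

lemma one_ne_zero' (hk : 3 ≤ k) : (1 : ZMod k) ≠ 0 := by
  have : NeZero k := ⟨by omega⟩
  intro h
  have h1 : ((1 : ℕ) : ZMod k).val = 1 := ZMod.val_cast_of_lt (by omega)
  rw [Nat.cast_one, h, ZMod.val_zero] at h1
  omega

lemma two_ne_zero' (hk : 3 ≤ k) : (2 : ZMod k) ≠ 0 := by
  have : NeZero k := ⟨by omega⟩
  intro h
  have h1 : ((2 : ℕ) : ZMod k).val = 2 := ZMod.val_cast_of_lt (by omega)
  rw [Nat.cast_ofNat, h, ZMod.val_zero] at h1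
  omega

lemma one_ne_two' (hk : 3 ≤ k) : (1 : ZMod k) ≠ 2 := by
  have : NeZero k := ⟨by omega⟩
  intro h
  have h1 : ((1 : ℕ) : ZMod k).val = 1 := ZMod.val_cast_of_lt (by omega)
  have h2 : ((2 : ℕ) : ZMod k).val = 2 := ZMod.val_cast_of_lt (by omega)
  rw [Nat.cast_one, h] at h1
  rw [Nat.cast_ofNat, h1] at h2
  omega


/-! ### the glued coloring -/

def ubase (g : Gam d k) (t0 : ℕ) : Gam d k :=
  ((((nf (g⁻¹ : Gam d k)).reverse.take t0).reverse).map fun p => ofc p.1 p.2).prod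

def deltab (y : Gam d k → Bool) (g : Gam d k) (t0 : ℕ) : Bool :=
  (decide ((t0 + 1) % 2 = 0)).xor (!(y (ubase g t0)⁻¹))

def colf (x y : Gam d k → Bool) (g : Gam d k) (t0 t2 : ℕ) : Gam d k → Bool :=
  fun v =>
    if cpl ((nf v).reverse) ((nf (g⁻¹ : Gam d k)).reverse) ≤ t0 then y v⁻¹
    else if t2 ≤ cpl ((nf v).reverse) ((nf (g⁻¹ : Gam d k)).reverse) then x (g⁻¹ * v⁻¹)
    else (decide ((nf v).length % 2 = 0)).xor (deltab y g t0)

def zcol (x y : Gam d k → Bool) (g : Gam d k) (t0 t2 : ℕ) : Gam d k → Bool :=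
  fun h => colf x y g t0 t2 h⁻¹

def propc (z : Gam d k → Bool) : Prop :=
  ∀ g' : Gam d k, ∀ i : Fin d,
    ∃ j₁ j₂ : ℕ, z (g' * sgen d k i ^ j₁) = true ∧ z (g' * sgen d k i ^ j₂) = false

lemma xor_solve (a c : Bool) : a.xor (a.xor c) = c := by
  cases a <;> cases c <;> rfl

lemma parity_flip (δ : Bool) (m : ℕ) :
    (decide ((m + 1) % 2 = 0)).xor δ = !((decide (m % 2 = 0)).xor δ) := by
  rcases Nat.even_or_odd m with h | h
  · have h0 : m % 2 = 0 := Nat.even_iff.mp h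
    have h1 : (m + 1) % 2 = 1 := by omega
    rw [h0, h1]
    cases δ <;> rfl
  · have h0 : m % 2 = 1 := Nat.odd_iff.mp h
    have h1 : (m + 1) % 2 = 0 := by omega
    rw [h0, h1]
    cases δ <;> rfl

lemma zcol_near (x y : Gam d k → Bool) (g : Gam d k) (t0 t2 : ℕ) (h : Gam d k)
    (hlen : (nf (h⁻¹ : Gam d k)).length ≤ t0) : zcol x y g t0 t2 h = y h := by
  unfold zcol colf
  rw [if_pos, inv_inv]
  calc cpl ((nf (h⁻¹ : Gam d k)).reverse) ((nf (g⁻¹ : Gam d k)).reverse)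
      ≤ (nf (h⁻¹ : Gam d k)).reverse.length := cpl_le_left _ _
    _ ≤ t0 := by simpa using hlen

lemma zcol_far (x y : Gam d k → Bool) (g : Gam d k) (t0 t2 : ℕ) (a : Gam d k)
    (ht : t0 < t2)
    (hlen : (nf (a⁻¹ : Gam d k)).length + t2 ≤ (nf (g⁻¹ : Gam d k)).length) :
    zcol x y g t0 t2 (g * a) = x a := by
  unfold zcol colf
  have hc : t2 ≤ cpl ((nf ((g * a)⁻¹ : Gam d k)).reverse) ((nf (g⁻¹ : Gam d k)).reverse) := by
    have hb := suffix_bound (a⁻¹ : Gam d k) (g⁻¹ : Gam d k)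
    rw [mul_inv_rev]
    omega
  rw [if_neg (by omega), if_pos hc]
  congr 1
  group


/-! ### expressing an element as a product of generators -/

def rep (p : Σ i : Fin d, Multiplicative (ZMod k)) : List (Fin d) :=
  List.replicate (Multiplicative.toAdd (p.2⁻¹)).val p.1

lemma rep_prod (hk : 3 ≤ k) :
    ∀ l : List (Σ i : Fin d, Multiplicative (ZMod k)),
      ((l.flatMap rep).map (sgen d k)).prod = (l.map fun p => (ofc p.1 p.2)⁻¹).prod := by
  intro l
  induction l with
  | nil => simp
  | cons p l ih =>
    rw [List.flatMap_cons, List.map_append, List.prod_append, ih, List.map_cons, List.prod_cons]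
    congr 1
    rw [rep, List.map_replicate, List.prod_replicate, sgen_pow, val_cast_self hk, ofc_inv,
      ofAdd_toAdd]

lemma rep_len (hk : 3 ≤ k) :
    ∀ l : List (Σ i : Fin d, Multiplicative (ZMod k)),
      (l.flatMap rep).length ≤ (k - 1) * l.length := by
  intro l
  induction l with
  | nil => simp
  | cons p l ih =>
    rw [List.flatMap_cons, List.length_append]
    have : NeZero k := ⟨by omega⟩
    have hv : (Multiplicative.toAdd (p.2⁻¹)).val < k := ZMod.val_lt _
    have : (rep (d := d) (k := k) p).length ≤ k - 1 := by
      rw [rep, List.length_replicate]; omega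
    simp only [List.length_cons]
    calc (rep p).length + (l.flatMap rep).length ≤ (k-1) + (k-1) * l.length := by omega
      _ = (k - 1) * (l.length + 1) := by ring

lemma exists_expr (hk : 3 ≤ k) (g : Gam d k) :
    ∃ (m : ℕ) (w : Fin m → Fin d),
      (List.ofFn fun idx : Fin m => sgen d k (w idx)).prod = g ∧
      m ≤ (k - 1) * (nf (g⁻¹ : Gam d k)).length := by
  set L : List (Fin d) := ((nf (g⁻¹ : Gam d k)).reverse).flatMap rep with hL
  refine ⟨L.length, fun idx => L.get idx, ?_, ?_⟩
  · have h1 : (List.ofFn fun idx => sgen d k (L.get idx)) = L.map (sgen d k) := by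
      rw [show (fun idx => sgen d k (L.get idx)) = (sgen d k) ∘ L.get from rfl,
        ← List.map_ofFn, List.ofFn_get]
    rw [h1, hL, rep_prod hk]
    conv_rhs => rw [show g = (g⁻¹ : Gam d k)⁻¹ by rw [inv_inv], ← v_prod (g⁻¹ : Gam d k),
      List.prod_inv_reverse, List.map_map, ← List.map_reverse]
    rfl
  · have h4 := rep_len (d := d) hk ((nf (g⁻¹ : Gam d k)).reverse)
    rw [List.length_reverse] at h4
    exact hL ▸ h4


/-! ### the main properness lemma -/

lemma zcol_propc (hk : 3 ≤ k) (x y : Gam d k → Bool) (g : Gam d k)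
    (hx : propc x) (hy : propc y) (t0 t2 : ℕ)
    (h03 : t0 + 3 ≤ t2) (h2n : t2 ≤ (nf (g⁻¹ : Gam d k)).length) :
    propc (zcol x y g t0 t2) := by
  have hNZ : NeZero k := ⟨by omega⟩
  intro g' i
  set qr := (nf (g⁻¹ : Gam d k)).reverse with hqr
  obtain ⟨b, u, hdec, hu⟩ := exists_decomp (g'⁻¹ : Gam d k) i
  set F : Multiplicative (ZMod k) → Gam d k := fun mm => ofc i mm * u with hF
  have conv1 : ∀ j : ℕ,
      (g' * sgen d k i ^ j)⁻¹ = F (Multiplicative.ofAdd (-(j : ZMod k)) * b) := by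
    intro j
    rw [coset_repr, hdec, hF]
    rw [← mul_assoc, ← map_mul]
  have conv2 : ∀ mm : Multiplicative (ZMod k), ∃ j : ℕ, g' * sgen d k i ^ j = (F mm)⁻¹ := by
    intro mm
    obtain ⟨j, hj⟩ := exists_j hk g' i (Multiplicative.toAdd (mm * b⁻¹))
    refine ⟨j, ?_⟩
    rw [hj]
    congr 1
    rw [ofAdd_toAdd, hdec, ← mul_assoc, ← map_mul, inv_mul_cancel_right]
  have key : ∀ m₁ m₂ : Multiplicative (ZMod k),
      colf x y g t0 t2 (F m₁) = true → colf x y g t0 t2 (F m₂) = false →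
      ∃ j₁ j₂ : ℕ, zcol x y g t0 t2 (g' * sgen d k i ^ j₁) = true ∧
        zcol x y g t0 t2 (g' * sgen d k i ^ j₂) = false := by
    intro m₁ m₂ h1 h2
    obtain ⟨j₁, hj₁⟩ := conv2 m₁
    obtain ⟨j₂, hj₂⟩ := conv2 m₂
    refine ⟨j₁, j₂, ?_, ?_⟩
    · show colf x y g t0 t2 (g' * sgen d k i ^ j₁)⁻¹ = true
      rw [hj₁, inv_inv]; exact h1
    · show colf x y g t0 t2 (g' * sgen d k i ^ j₂)⁻¹ = false
      rw [hj₂, inv_inv]; exact h2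
  have keyPair : ∀ m₁ m₂ : Multiplicative (ZMod k),
      colf x y g t0 t2 (F m₁) = !(colf x y g t0 t2 (F m₂)) →
      ∃ j₁ j₂ : ℕ, zcol x y g t0 t2 (g' * sgen d k i ^ j₁) = true ∧
        zcol x y g t0 t2 (g' * sgen d k i ^ j₂) = false := by
    intro m₁ m₂ h
    cases hb2 : colf x y g t0 t2 (F m₂) with
    | false => exact key m₁ m₂ (by rw [h, hb2]; rfl) hb2
    | true => exact key m₂ m₁ hb2 (by rw [h, hb2]; rfl)
  have keyY : (∀ mm, colf x y g t0 t2 (F mm) = y (F mm)⁻¹) →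
      ∃ j₁ j₂ : ℕ, zcol x y g t0 t2 (g' * sgen d k i ^ j₁) = true ∧
        zcol x y g t0 t2 (g' * sgen d k i ^ j₂) = false := by
    intro hall
    obtain ⟨j₁, j₂, hv1, hv2⟩ := hy g' i
    refine ⟨j₁, j₂, ?_, ?_⟩
    · show colf x y g t0 t2 (g' * sgen d k i ^ j₁)⁻¹ = true
      rw [conv1 j₁, hall, ← conv1 j₁, inv_inv, hv1]
    · show colf x y g t0 t2 (g' * sgen d k i ^ j₂)⁻¹ = false
      rw [conv1 j₂, hall, ← conv1 j₂, inv_inv, hv2]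
  have keyX : (∀ mm, colf x y g t0 t2 (F mm) = x (g⁻¹ * (F mm)⁻¹)) →
      ∃ j₁ j₂ : ℕ, zcol x y g t0 t2 (g' * sgen d k i ^ j₁) = true ∧
        zcol x y g t0 t2 (g' * sgen d k i ^ j₂) = false := by
    intro hall
    obtain ⟨j₁, j₂, hv1, hv2⟩ := hx (g⁻¹ * g') i
    refine ⟨j₁, j₂, ?_, ?_⟩
    · show colf x y g t0 t2 (g' * sgen d k i ^ j₁)⁻¹ = true
      rw [conv1 j₁, hall, ← conv1 j₁, inv_inv, ← mul_assoc]
      exact hv1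
    · show colf x y g t0 t2 (g' * sgen d k i ^ j₂)⁻¹ = false
      rw [conv1 j₂, hall, ← conv1 j₂, inv_inv, ← mul_assoc]
      exact hv2
  have colf_eq : ∀ v : Gam d k, colf x y g t0 t2 v =
      (if cpl ((nf v).reverse) qr ≤ t0 then y v⁻¹
        else if t2 ≤ cpl ((nf v).reverse) qr then x (g⁻¹ * v⁻¹)
        else (decide ((nf v).length % 2 = 0)).xor (deltab y g t0)) := by
    intro v; rw [hqr]; rfl
  have hF1 : F 1 = u := by rw [hF]; simp
  have hFnf : ∀ mm : Multiplicative (ZMod k), mm ≠ 1 → nf (F mm) = ⟨i, mm⟩ :: nf u :=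
    fun mm hmm => nf_of_mul mm hmm u hu
  have hmm0 : (Multiplicative.ofAdd (1 : ZMod k)) ≠ 1 := by
    simpa using one_ne_zero' hk
  set w := nf u with hw
  set m := w.length with hm
  set γ := cpl w.reverse qr with hγ
  have hwrev : w.reverse.length = m := by simp [hm]
  have hqrlen : qr.length = (nf (g⁻¹ : Gam d k)).length := by rw [hqr]; simp
  -- uniform-value helper
  have allSame : ∀ γ0 : ℕ, (∀ mm, cpl ((nf (F mm)).reverse) qr = γ0) →
      (∀ mm, mm ≠ 1 → (nf (F mm)).length = m + 1) →
      ∃ j₁ j₂ : ℕ, zcol x y g t0 t2 (g' * sgen d k i ^ j₁) = true ∧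
        zcol x y g t0 t2 (g' * sgen d k i ^ j₂) = false := by
    intro γ0 hc hlen
    by_cases hc1 : γ0 ≤ t0
    · apply keyY
      intro mm
      rw [colf_eq, hc mm, if_pos hc1]
    · by_cases hc2 : t2 ≤ γ0
      · apply keyX
        intro mm
        rw [colf_eq, hc mm, if_neg hc1, if_pos hc2]
      · apply keyPair (Multiplicative.ofAdd (1 : ZMod k)) 1
        have e1 : colf x y g t0 t2 (F 1) =
            (decide ((nf u).length % 2 = 0)).xor (deltab y g t0) := by
          rw [colf_eq, hc 1, if_neg hc1, if_neg hc2, hF1]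
        have e2 : colf x y g t0 t2 (F (Multiplicative.ofAdd (1 : ZMod k))) =
            (decide ((m + 1) % 2 = 0)).xor (deltab y g t0) := by
          rw [colf_eq, hc _, if_neg hc1, if_neg hc2, hlen _ hmm0]
        rw [e1, e2, ← hw, ← hm, parity_flip]
  have hlenF : ∀ mm, mm ≠ 1 → (nf (F mm)).length = m + 1 := by
    intro mm hmm
    rw [hFnf mm hmm, List.length_cons]
  by_cases hlt : γ < m
  · apply allSame γ _ hlenF
    intro mm
    by_cases hmm : mm = 1
    · rw [hmm, hF1]
    · rw [hFnf mm hmm, List.reverse_cons, cpl_append_lt (by rw [hwrev]; exact hlt)]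
  · have hmle : γ ≤ m := by
      have := cpl_le_left w.reverse qr
      rw [hwrev] at this
      omega
    have heq : γ = m := by omega
    have hpre : w.reverse <+: qr := cpl_eq_left (by rw [← hγ, heq, hwrev])
    obtain ⟨r, hr⟩ := hpre
    rcases r with _ | ⟨⟨i', b'⟩, r'⟩
    · -- u is the full path: everything deep
      have hmn : m = qr.length := by rw [← hr, List.append_nil, hwrev]
      apply allSame m _ hlenF
      intro mm
      by_cases hmm : mm = 1
      · rw [hmm, hF1]; exact heq ▸ hγ.symm
      · rw [hFnf mm hmm, List.reverse_cons, ← hr, cpl_append_left, hwrev]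
        simp
    · have hb' : b' ≠ 1 := by
        have hmem : (⟨i', b'⟩ : Σ _ : Fin d, Multiplicative (ZMod k)) ∈ qr := by
          rw [← hr]
          exact List.mem_append_right _ List.mem_cons_self
        rw [hqr, List.mem_reverse] at hmem
        exact (Word.equiv (g⁻¹ : Gam d k)).ne_one _ hmem
      have hcv : ∀ mm : Multiplicative (ZMod k), mm ≠ 1 →
          cpl ((nf (F mm)).reverse) qr =
            if (⟨i, mm⟩ : Σ _ : Fin d, Multiplicative (ZMod k)) = ⟨i', b'⟩ then m + 1 else m := by
        intro mm hmm
        rw [hFnf mm hmm, List.reverse_cons, ← hr, cpl_append_left, cpl_cons, hwrev]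
        split <;> simp
      by_cases hii : i = i'
      · subst hii
        have hcv' : ∀ mm : Multiplicative (ZMod k), mm ≠ 1 →
            cpl ((nf (F mm)).reverse) qr = if mm = b' then m + 1 else m := by
          intro mm hmm
          rw [hcv mm hmm]
          by_cases h : mm = b'
          · rw [if_pos h, if_pos (by rw [h])]
          · rw [if_neg h, if_neg (by simp [h])]
        have hcv1 : cpl ((nf (F 1)).reverse) qr = m := by
          rw [hF1]; exact heq ▸ hγ.symm
        have hfive : m + 1 ≤ t0 ∨ m = t0 ∨ (t0 < m ∧ m + 1 < t2) ∨ (m + 1 = t2) ∨ t2 ≤ m := by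
          omega
        rcases hfive with h5 | h5 | ⟨h5a, h5b⟩ | h5 | h5
        · -- everything shallow : use y
          apply keyY
          intro mm
          by_cases hmm : mm = 1
          · rw [hmm, colf_eq, hcv1, if_pos (by omega)]
          · rw [colf_eq, hcv' mm hmm]
            by_cases hb2 : mm = b'
            · rw [if_pos hb2, if_pos (by omega)]
            · rw [if_neg hb2, if_pos (by omega)]
        · -- boundary coset between the y-region and the middle region
          have hu0 : u = ubase g t0 := by
            have htake : qr.take t0 = w.reverse := by
              rw [← hr]
              exact List.take_left' (by rw [hwrev, h5])
            rw [ubase, ← hqr, htake, List.reverse_reverse]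
            exact (v_prod u).symm
          have hvb : colf x y g t0 t2 (F b') = !(y u⁻¹) := by
            rw [colf_eq, hcv' b' hb', if_pos rfl, if_neg (by omega), if_neg (by omega),
              hlenF b' hb', hu0, deltab, h5, xor_solve]
          have hS1 : ∀ mm, mm ≠ b' → colf x y g t0 t2 (F mm) = y (F mm)⁻¹ := by
            intro mm hmmb
            by_cases hmm : mm = 1
            · rw [hmm, colf_eq, hcv1, if_pos (by omega)]
            · rw [colf_eq, hcv' mm hmm, if_neg hmmb, if_pos (by omega)]
          apply keyPair b' 1
          have h1b : (1 : Multiplicative (ZMod k)) ≠ b' := fun h => hb' h.symm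
          rw [hvb, hS1 1 h1b, hF1]
        · -- interior: parity
          apply keyPair b' 1
          have e1 : colf x y g t0 t2 (F 1) =
              (decide (m % 2 = 0)).xor (deltab y g t0) := by
            rw [colf_eq, hcv1, if_neg (by omega), if_neg (by omega), hF1, ← hw, ← hm]
          have e2 : colf x y g t0 t2 (F b') =
              (decide ((m + 1) % 2 = 0)).xor (deltab y g t0) := by
            rw [colf_eq, hcv' b' hb', if_pos rfl, if_neg (by omega), if_neg (by omega),
              hlenF b' hb']
          rw [e1, e2, parity_flip]
        · -- boundary coset between the middle region and the x-region
          obtain ⟨mm2, hmm2one, hmm2b⟩ :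
              ∃ mm2 : Multiplicative (ZMod k), mm2 ≠ 1 ∧ mm2 ≠ b' := by
            by_cases hb1 : b' = Multiplicative.ofAdd (1 : ZMod k)
            · refine ⟨Multiplicative.ofAdd (2 : ZMod k), ?_, ?_⟩
              · simpa using two_ne_zero' hk
              · rw [hb1]
                simpa using fun h => (one_ne_two' hk) h.symm
            · exact ⟨Multiplicative.ofAdd (1 : ZMod k), hmm0, fun h => hb1 h.symm⟩
          apply keyPair mm2 1
          have e1 : colf x y g t0 t2 (F 1) =
              (decide (m % 2 = 0)).xor (deltab y g t0) := by
            rw [colf_eq, hcv1, if_neg (by omega), if_neg (by omega), hF1, ← hw, ← hm]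
          have e2 : colf x y g t0 t2 (F mm2) =
              (decide ((m + 1) % 2 = 0)).xor (deltab y g t0) := by
            rw [colf_eq, hcv' mm2 hmm2one, if_neg hmm2b, if_neg (by omega), if_neg (by omega),
              hlenF mm2 hmm2one]
          rw [e1, e2, parity_flip]
        · -- everything deep : use x
          apply keyX
          intro mm
          by_cases hmm : mm = 1
          · rw [hmm, colf_eq, hcv1, if_neg (by omega), if_pos (by omega)]
          · rw [colf_eq, hcv' mm hmm]
            by_cases hb2 : mm = b'
            · rw [if_pos hb2, if_neg (by omega), if_pos (by omega)]
            · rw [if_neg hb2, if_neg (by omega), if_pos (by omega)]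
      · -- the coset does not continue along the path
        apply allSame m _ hlenF
        intro mm
        by_cases hmm : mm = 1
        · rw [hmm, hF1]; exact heq ▸ hγ.symm
        · rw [hcv mm hmm, if_neg (by simp [hii])]

end Stmt18Aux

open Stmt18Aux in
/-- Topological mixing of the shift action of `Γ = (ℤ/kℤ)^{*d}` (free product of `d`
copies of `ℤ/kℤ`) on the space `X` of proper 2-colorings of its Cayley hyper-tree:
for any open `A, B` meeting `X` there is `N` such that whenever every expression of
`g` as a product of the generators `s i` has length `> N` (i.e. `|g| > N`),
`gA ∩ B ≠ ∅` within `X`. -/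
theorem stmt18 (d k : ℕ) (hd : 2 ≤ d) (hk : 3 ≤ k) :
    let Γ := Monoid.CoprodI fun _ : Fin d => Multiplicative (ZMod k)
    let s : Fin d → Γ := fun i =>
      Monoid.CoprodI.of (M := fun _ : Fin d => Multiplicative (ZMod k)) (i := i)
        (Multiplicative.ofAdd (1 : ZMod k))
    let X : Set (Γ → Bool) := {x | ∀ g : Γ, ∀ i : Fin d,
      ∃ j₁ j₂ : ℕ, x (g * s i ^ j₁) = true ∧ x (g * s i ^ j₂) = false}
    ∀ A B : Set (Γ → Bool), IsOpen A → IsOpen B →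
      (A ∩ X).Nonempty → (B ∩ X).Nonempty →
      ∃ N : ℕ, ∀ g : Γ,
        (∀ (m : ℕ) (w : Fin m → Fin d),
          (List.ofFn fun idx : Fin m => s (w idx)).prod = g → N < m) →
        (((fun x : Γ → Bool => fun h : Γ => x (g⁻¹ * h)) '' (A ∩ X))
            ∩ (B ∩ X)).Nonempty := by
  intro Γ s X A B hA hB hAne hBne
  obtain ⟨x, hxA, hxX⟩ := hAne
  obtain ⟨y, hyB, hyX⟩ := hBne
  obtain ⟨Fa, ua, hua, hsubA⟩ := isOpen_pi_iff.1 hA x hxA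
  obtain ⟨Fb, ub, hub, hsubB⟩ := isOpen_pi_iff.1 hB y hyB
  set R : ℕ := (Fa.sup fun a => (nf (a⁻¹ : Gam d k)).length) ⊔
    (Fb.sup fun bb => (nf (bb⁻¹ : Gam d k)).length) with hR
  refine ⟨(k - 1) * (2 * R + 4), ?_⟩
  intro g hg
  obtain ⟨mE, wE, hprod, hlen⟩ := exists_expr (d := d) hk g
  have hn : 2 * R + 4 < (nf (g⁻¹ : Gam d k)).length := by
    have h1 := hg mE wE hprod
    exact Nat.lt_of_mul_lt_mul_left (a := k - 1) (by omega)
  set t0 : ℕ := R + 1 with ht0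
  set t2 : ℕ := R + 4 with ht2
  set z : Gam d k → Bool := zcol x y g t0 t2 with hz
  have hzX : propc z := zcol_propc hk x y g hxX hyX t0 t2 (by omega) (by omega)
  have hzB : z ∈ B := by
    apply hsubB
    rw [Set.mem_pi]
    intro bb hbb
    have hble : (nf (bb⁻¹ : Gam d k)).length ≤ t0 := by
      have h3 : (nf (bb⁻¹ : Gam d k)).length ≤ R :=
        le_trans (Finset.le_sup (f := fun bb => (nf (bb⁻¹ : Gam d k)).length) hbb)
          (le_sup_right (a := Fa.sup fun a => (nf (a⁻¹ : Gam d k)).length))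
      omega
    rw [hz, zcol_near x y g t0 t2 bb hble]
    exact (hub bb hbb).2
  set z0 : Gam d k → Bool := fun h => z (g * h) with hz0
  have hz0A : z0 ∈ A := by
    apply hsubA
    rw [Set.mem_pi]
    intro a ha
    have hale : (nf (a⁻¹ : Gam d k)).length ≤ R := by
      have h3 : (nf (a⁻¹ : Gam d k)).length ≤ R :=
        le_trans (Finset.le_sup (f := fun a => (nf (a⁻¹ : Gam d k)).length) ha)
          (le_sup_left (b := Fb.sup fun bb => (nf (bb⁻¹ : Gam d k)).length))
      omega
    have : z0 a = x a := by
      rw [hz0, hz]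
      exact zcol_far x y g t0 t2 a (by omega) (by omega)
    rw [this]
    exact (hua a ha).2
  have hz0X : z0 ∈ X := by
    intro g' i
    obtain ⟨j₁, j₂, h1, h2⟩ := hzX (g * g') i
    refine ⟨j₁, j₂, ?_, ?_⟩
    · show z (g * (g' * sgen d k i ^ j₁)) = true
      rw [← mul_assoc]; exact h1
    · show z (g * (g' * sgen d k i ^ j₂)) = false
      rw [← mul_assoc]; exact h2
  refine ⟨z, ⟨z0, ⟨hz0A, hz0X⟩, ?_⟩, hzB, hzX⟩
  funext h
  show z (g * (g⁻¹ * h)) = z h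
  rw [← mul_assoc, mul_inv_cancel, one_mul]
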